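/- Let (V, ω) be a symplectic vector space with odd symplectic form. The bracket {−,−} and cobracket Δ on 𝔥[V] = DR⁰(V) satisfy the involutivity condition: the composite {−,−}∘Δ : 𝔥[V] → 𝔥[V] is the zero map. -/

import Mathlib

noncomputable section

/-!
STATEMENT 11: Let (V, ω) be a symplectic vector space with odd symplectic form.  The
bracket {−,−} and cobracket Δ on 𝔥[V] = DR⁰(V) satisfy the involutivity condition:
the composite {−,−}∘Δ : 𝔥[V] → 𝔥[V] is the zero map.

Coordinates as in the paper: letters `I` with parities `p`, T(V*) = FA I, DR⁰(V) its
quotient by graded commutators (projection π = mkQ (Csub p)), odd pairing ⟨−,−⟩⁻¹ given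
by `c`.  The bracket `brkt` and cobracket `cob` are given on cyclic words by the explicit
formulas of the paper, computed in T(V*); the claim is that applying the bracket to the
two tensor factors of Δ of any cyclic word yields zero in DR⁰(V).
-/


open scoped TensorProduct

/-- The sign (−1)^z for a parity z ∈ ℤ/2. -/
def sgn (z : ZMod 2) : ℚ := (-1 : ℚ) ^ z.val

/-- The free (tensor) algebra T(V*) on the homogeneous coordinates indexed by `I`. -/
abbrev FA (I : Type) := FreeAlgebra ℚ I

/-- The basis of words (noncommutative monomials) of T(V*). -/
def bas (I : Type) : Module.Basis (FreeMonoid I) ℚ (FA I) := FreeAlgebra.basisFreeMonoid ℚ I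

/-- The monomial associated to a word. -/
def mono {I : Type} (w : List I) : FA I := bas I (FreeMonoid.ofList w)

/-- The parity of a word: the sum of the parities of its letters. -/
def wpar {I : Type} (p : I → ZMod 2) (w : List I) : ZMod 2 := (w.map p).sum

/-- Extend a function on words to a linear map on T(V*). -/
def mk1 {I M : Type} [AddCommGroup M] [Module ℚ M] (F : List I → M) : FA I →ₗ[ℚ] M :=
  (bas I).constr ℚ (fun w => F (FreeMonoid.toList w))

/-- Extend a function on pairs of words to a bilinear map on T(V*). -/
def mk2 {I M : Type} [AddCommGroup M] [Module ℚ M] (F : List I → List I → M) :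
    FA I →ₗ[ℚ] FA I →ₗ[ℚ] M :=
  (bas I).constr ℚ (fun w => mk1 (F (FreeMonoid.toList w)))

/-- Delete the i-th letter of a word and rotate the result so that it starts just after
the deleted letter (the effect of the cyclic permutation z_{n−1}^{i−1} in the paper). -/
def cutRot {I : Type} (w : List I) (i : ℕ) : List I := w.drop (i + 1) ++ w.take i

/-- The submodule of graded commutators [T(V*),T(V*)]; the quotient by it is the space
DR⁰(V) of noncommutative 0-forms (cyclic words). -/
def Csub {I : Type} (p : I → ZMod 2) : Submodule ℚ (FA I) :=
  Submodule.span ℚ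
    {x | ∃ u v : List I, x = mono (u ++ v) - sgn (wpar p u * wpar p v) • mono (v ++ u)}

/-- The explicit formula (eqn (bracket) of the paper) for the odd Lie bracket of two
cyclic words, computed in T(V*):
{a₁⋯aₙ, b₁⋯bₘ} = Σᵢⱼ (−1)^p ⟨aᵢ,bⱼ⟩⁻¹ (z^{i−1}·[a₁⋯âᵢ⋯aₙ])(z^{j−1}·[b₁⋯b̂ⱼ⋯bₘ]),
the Koszul signs of the cyclic reorderings included. -/
def brW {I : Type} (p : I → ZMod 2) (c : I → I → ℚ) (w v : List I) : FA I :=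
  ∑ i : Fin w.length, ∑ j : Fin v.length,
    (sgn (p (w.get i) * wpar p (w.take i.val)
          + p (v.get j) * (wpar p w + wpar p (v.take j.val))
          + wpar p (w.take i.val) * wpar p (w.drop (i.val + 1))
          + wpar p (v.take j.val) * wpar p (v.drop (j.val + 1)))
        * c (w.get i) (v.get j))
      • mono (cutRot w i.val ++ cutRot v j.val)

/-- The bracket as a bilinear map on T(V*). -/
def brkt {I : Type} (p : I → ZMod 2) (c : I → I → ℚ) : FA I →ₗ[ℚ] FA I →ₗ[ℚ] FA I :=
  mk2 (brW p c)

/-- The explicit formula (eqn (cobracket) of the paper) for the odd Lie cobracket of a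
cyclic word, computed in T(V*) ⊗ T(V*):
Δ(a₁⋯aₙ) = ½ Σ_{i<j} (−1)^p ⟨aᵢ,aⱼ⟩⁻¹ [1+(12)]·[(a_{i+1}⋯a_{j−1}) ⊗ (a_{j+1}⋯aₙa₁⋯a_{i−1})]. -/
def cobW {I : Type} (p : I → ZMod 2) (c : I → I → ℚ) (w : List I) :
    TensorProduct ℚ (FA I) (FA I) :=
  ∑ i : Fin w.length, ∑ j : Fin w.length,
    if i.val < j.val then
      (let w₁ := (w.drop (i.val + 1)).take (j.val - i.val - 1)
       let w₂ := w.drop (j.val + 1) ++ w.take i.val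
       ((1 : ℚ)/2 * sgn (p (w.get i) * wpar p (w.take (i.val + 1))
              + p (w.get j) * wpar p (w.take (j.val + 1))
              + wpar p (w.take i.val) * (wpar p w₁ + wpar p (w.drop (j.val + 1))))
          * c (w.get i) (w.get j))
        • (mono w₁ ⊗ₜ[ℚ] mono w₂ + sgn (wpar p w₁ * wpar p w₂) • mono w₂ ⊗ₜ[ℚ] mono w₁))
    else 0

/-- The cobracket as a linear map T(V*) → T(V*) ⊗ T(V*). -/
def cob {I : Type} (p : I → ZMod 2) (c : I → I → ℚ) :
    FA I →ₗ[ℚ] TensorProduct ℚ (FA I) (FA I) :=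
  mk1 (cobW p c)

section Aux
variable {I : Type} (p : I → ZMod 2) (c : I → I → ℚ)

lemma zmod2_cases (x : ZMod 2) : x = 0 ∨ x = 1 := by revert x; decide

lemma sgn_add (x y : ZMod 2) : sgn (x + y) = sgn x * sgn y := by
  rcases zmod2_cases x with h | h <;> rcases zmod2_cases y with h' | h' <;>
    subst h <;> subst h' <;> norm_num [sgn, show ((1:ZMod 2)).val = 1 from rfl, show ((0:ZMod 2)).val = 0 from rfl, show ((2:ZMod 2)).val = 0 from rfl]

lemma sgn_flip {x y : ZMod 2} (h : x + y = 1) : sgn x = - sgn y := by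
  rcases zmod2_cases x with h1 | h1 <;> rcases zmod2_cases y with h2 | h2 <;>
    subst h1 <;> subst h2 <;> first | (exfalso; revert h; decide) | norm_num [sgn, show ((1:ZMod 2)).val = 1 from rfl, show ((0:ZMod 2)).val = 0 from rfl]

lemma sgn_sq (x : ZMod 2) : sgn x * sgn x = 1 := by
  rcases zmod2_cases x with h | h <;> subst h <;> norm_num [sgn, show ((1:ZMod 2)).val = 1 from rfl, show ((0:ZMod 2)).val = 0 from rfl]

lemma zmod2_ne {x y : ZMod 2} (h : x ≠ y) : x + y = 1 := by revert h; revert x y; decide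

lemma wpar_append (x y : List I) : wpar p (x ++ y) = wpar p x + wpar p y := by
  simp [wpar]

lemma wpar_cons (a : I) (x : List I) : wpar p (a :: x) = p a + wpar p x := by
  simp [wpar]

lemma wpar_nil : wpar p ([] : List I) = 0 := by simp [wpar]

lemma mono_mem_rot (x y : List I) :
    mono (x ++ y) - sgn (wpar p x * wpar p y) • mono (y ++ x) ∈ Csub p :=
  Submodule.subset_span ⟨x, y, rfl⟩

/-- rotation in the quotient -/
lemma mkQ_rot (x y : List I) :
    (Csub p).mkQ (mono (x ++ y)) = sgn (wpar p x * wpar p y) • (Csub p).mkQ (mono (y ++ x)) := by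
  have h := (Submodule.Quotient.mk_eq_zero (Csub p)).2 (mono_mem_rot p x y)
  have : (Csub p).mkQ (mono (x ++ y) - sgn (wpar p x * wpar p y) • mono (y ++ x)) = 0 := h
  rw [map_sub, map_smul, sub_eq_zero] at this
  exact this

lemma mk1_mono {M : Type} [AddCommGroup M] [Module ℚ M] (F : List I → M) (w : List I) :
    mk1 F (mono w) = F w := by
  rw [mk1, mono, Module.Basis.constr_basis, FreeMonoid.toList_ofList]

lemma mk2_mono {M : Type} [AddCommGroup M] [Module ℚ M] (F : List I → List I → M)
    (w v : List I) : mk2 F (mono w) (mono v) = F w v := by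
  rw [mk2, mono, Module.Basis.constr_basis, FreeMonoid.toList_ofList, mk1_mono]

lemma brkt_mono (w v : List I) : brkt p c (mono w) (mono v) = brW p c w v := mk2_mono _ _ _

lemma cob_mono (w : List I) : cob p c (mono w) = cobW p c w := mk1_mono _ _

lemma take_eq (A B : List I) {m : ℕ} (h : m = A.length) : (A ++ B).take m = A := by
  subst h; exact List.take_left

lemma drop_eq (A B : List I) {m : ℕ} (h : m = A.length) : (A ++ B).drop m = B := by
  subst h; exact List.drop_left

end Aux
section Main
variable {I : Type} (p : I → ZMod 2) (c : I → I → ℚ)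

/-- inner arc between positions i and j -/
def Wi (u : List I) (i j : ℕ) : List I := (u.drop (i+1)).take (j - i - 1)
/-- outer arc -/
def Wo (u : List I) (i j : ℕ) : List I := u.drop (j+1) ++ u.take i

/-- the image in DR⁰ of one summand of the bracket formula -/
noncomputable def cterm (ax ay : I) (x y : List I) (k l : ℕ) : FA I ⧸ Csub p :=
  (sgn (p ax * wpar p (x.take k) + p ay * (wpar p x + wpar p (y.take l))
      + wpar p (x.take k) * wpar p (x.drop (k+1)) + wpar p (y.take l) * wpar p (y.drop (l+1)))
    * c ax ay) • (Csub p).mkQ (mono (cutRot x k ++ cutRot y l))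

/-- the cobracket coefficient -/
noncomputable def kap (u : List I) (xi xj : I) (i j : ℕ) : ℚ :=
  1/2 * sgn (p xi * wpar p (u.take (i+1)) + p xj * wpar p (u.take (j+1))
      + wpar p (u.take i) * (wpar p (Wi u i j) + wpar p (u.drop (j+1))))
    * c xi xj

noncomputable def f0 (u : List I) (i j a b : ℕ) : FA I ⧸ Csub p :=
  if h : i < a ∧ a < j ∧ j < u.length ∧ (j < b ∨ b < i) ∧ b < u.length then
    kap p c u (u[i]'(by omega)) (u[j]'(by omega)) i j •
      cterm p c (u[a]'(by omega)) (u[b]'(by omega)) (Wi u i j) (Wo u i j)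
        (a - i - 1) (if j < b then b - j - 1 else u.length - 1 - j + b)
  else 0

noncomputable def f1 (u : List I) (i j a b : ℕ) : FA I ⧸ Csub p :=
  if h : i < b ∧ b < j ∧ j < u.length ∧ (j < a ∨ a < i) ∧ a < u.length then
    (kap p c u (u[i]'(by omega)) (u[j]'(by omega)) i j *
        sgn (wpar p (Wi u i j) * wpar p (Wo u i j))) •
      cterm p c (u[a]'(by omega)) (u[b]'(by omega)) (Wo u i j) (Wi u i j)
        (if j < a then a - j - 1 else u.length - 1 - j + a) (b - i - 1)
  else 0

lemma lenWi (u : List I) {i j : ℕ} (hj : j < u.length) : (Wi u i j).length = j - i - 1 := by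
  simp [Wi]; omega

lemma lenWo (u : List I) {i j : ℕ} (hi : i ≤ u.length) : (Wo u i j).length = u.length - 1 - j + i ∨
    (Wo u i j).length = u.length - (j+1) + i := by
  right; simp [Wo]; omega

lemma lenWo' (u : List I) {i j : ℕ} (hi : i ≤ u.length) (hj : j < u.length) :
    (Wo u i j).length = u.length - 1 - j + i := by
  simp [Wo]; omega

lemma getWi (u : List I) {i j k : ℕ} (hk : k < (Wi u i j).length) :
    (Wi u i j)[k] = u[i+1+k]'(by simp [Wi] at hk; omega) := by
  simp [Wi]

lemma getWoLo (u : List I) {i j l : ℕ} (hl : l < (Wo u i j).length) (h2 : l < u.length - 1 - j) :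
    (Wo u i j)[l] = u[j+1+l]'(by simp [Wo] at hl ⊢; omega) := by
  have hd : l < (u.drop (j+1)).length := by simp; omega
  simp [Wo, List.getElem_append, hd]
  rw [dif_pos (by omega)]

lemma getWoHi (u : List I) {i j l : ℕ} (hl : l < (Wo u i j).length)
    (h2 : u.length - 1 - j ≤ l) (hj : j < u.length) :
    (Wo u i j)[l] = u[l - (u.length - 1 - j)]'(by simp [Wo] at hl; omega) := by
  have hd : ¬ l < (u.drop (j+1)).length := by simp; omega
  have : (u.drop (j+1)).length = u.length - 1 - j := by simp; omega
  simp [Wo, List.getElem_append, hd, List.getElem_take, this]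
  rw [dif_neg (by omega)]

end Main
section Expand
variable {I : Type} (p : I → ZMod 2) (c : I → I → ℚ)

lemma brW_mkQ (x y : List I) :
    (Csub p).mkQ (brW p c x y) =
      ∑ k : Fin x.length, ∑ l : Fin y.length,
        cterm p c (x.get k) (y.get l) x y k l := by
  rw [brW, map_sum]
  refine Finset.sum_congr rfl fun k _ => ?_
  rw [map_sum]
  refine Finset.sum_congr rfl fun l _ => ?_
  rw [map_smul, cterm]

set_option maxHeartbeats 1000000 in
lemma S0 (u : List I) (i j : Fin u.length) (hij : i.1 < j.1) :
    ∑ a : Fin u.length, ∑ b : Fin u.length, f0 p c u i j a b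
      = kap p c u (u.get i) (u.get j) i j • (Csub p).mkQ (brW p c (Wi u i j) (Wo u i j)) := by
  classical
  rw [brW_mkQ]
  simp only [Finset.smul_sum]
  rw [show (∑ a : Fin u.length, ∑ b : Fin u.length, f0 p c u i j a b)
      = ∑ ab : Fin u.length × Fin u.length, f0 p c u i j ab.1 ab.2 from
    (Fintype.sum_prod_type (f := fun ab : Fin u.length × Fin u.length => f0 p c u (i : ℕ) (j : ℕ) ab.1 ab.2)).symm]
  rw [show (∑ k : Fin (Wi u i j).length, ∑ l : Fin (Wo u i j).length,
        kap p c u (u.get i) (u.get j) i j •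
          cterm p c ((Wi u i j).get k) ((Wo u i j).get l) (Wi u i j) (Wo u i j) k l)
      = ∑ kl : Fin (Wi u i j).length × Fin (Wo u i j).length,
        kap p c u (u.get i) (u.get j) i j •
          cterm p c ((Wi u i j).get kl.1) ((Wo u i j).get kl.2) (Wi u i j) (Wo u i j) kl.1 kl.2 from
    (Fintype.sum_prod_type (f := fun kl : Fin (Wi u i j).length × Fin (Wo u i j).length =>
      kap p c u (u.get i) (u.get j) i j •
        cterm p c ((Wi u i j).get kl.1) ((Wo u i j).get kl.2) (Wi u i j) (Wo u i j) kl.1 kl.2)).symm]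
  set P : Fin u.length × Fin u.length → Prop := fun ab => i.1 < ab.1.1 ∧ ab.1.1 < j.1 ∧ (j.1 < ab.2.1 ∨ ab.2.1 < i.1) with hP
  rw [← Finset.sum_filter_of_ne (p := P) (by
    intro ab _ hne
    by_contra hc
    exact hne (dif_neg (by simp [hP] at hc; omega)))]
  have hjn : j.1 < u.length := j.2
  have hin : i.1 < u.length := i.2
  have hWi : (Wi u i j).length = j.1 - i.1 - 1 := lenWi u hjn
  have hWo : (Wo u i j).length = u.length - 1 - j.1 + i.1 := lenWo' u (le_of_lt hin) hjn
  refine Finset.sum_bij'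
    (fun ab hab => ((⟨ab.1.1 - i.1 - 1, by
        have hh := hWi; have ha := ab.1.2; simp [hP, Finset.mem_filter] at hab; omega⟩ : Fin (Wi u i j).length),
      (⟨if j.1 < ab.2.1 then ab.2.1 - j.1 - 1 else u.length - 1 - j.1 + ab.2.1, by
        have hh := hWo; have hb := ab.2.2; simp [hP, Finset.mem_filter] at hab; split <;> omega⟩ : Fin (Wo u i j).length)))
    (fun kl _ => ((⟨i.1 + 1 + kl.1.1, by have := lt_of_lt_of_eq kl.1.2 hWi; omega⟩ : Fin u.length),
      (⟨if kl.2.1 < u.length - 1 - j.1 then j.1 + 1 + kl.2.1 else kl.2.1 - (u.length - 1 - j.1), by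
        have := lt_of_lt_of_eq kl.2.2 hWo; split <;> omega⟩ : Fin u.length)))
    (fun ab hab => Finset.mem_univ _)
    (fun kl _ => by
      have h1 := lt_of_lt_of_eq kl.1.2 hWi; have h2 := lt_of_lt_of_eq kl.2.2 hWo
      simp only [Finset.mem_filter, Finset.mem_univ, true_and, hP]
      refine ⟨by omega, by omega, ?_⟩
      split <;> omega)
    (fun ab hab => by
      simp only [hP, Finset.mem_filter, Finset.mem_univ, true_and] at hab
      have hb2 := ab.2.2
      ext
      · simp; omega
      · simp only []
        rcases hab.2.2 with h | h
        · rw [if_pos h, if_pos (show (ab.2.1 - j.1 - 1 : ℕ) < u.length - 1 - j.1 from by omega)]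
          omega
        · rw [if_neg (show ¬ (j.1 < ab.2.1) from by omega),
            if_neg (show ¬ (u.length - 1 - j.1 + ab.2.1 < u.length - 1 - j.1) from by omega)]
          omega)
    (fun kl _ => by
      have h1 := lt_of_lt_of_eq kl.1.2 hWi; have h2 := lt_of_lt_of_eq kl.2.2 hWo
      ext
      · simp; omega
      · simp only []
        rcases Nat.lt_or_ge kl.2.1 (u.length - 1 - j.1) with h | h
        · rw [if_pos (show kl.2.1 < u.length - 1 - j.1 from h),
            if_pos (show j.1 < j.1 + 1 + kl.2.1 from by omega)]
          omega
        · rw [if_neg (show ¬ (kl.2.1 < u.length - 1 - j.1) from not_lt.2 h),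
            if_neg (show ¬ (j.1 < kl.2.1 - (u.length - 1 - j.1)) from by omega)]
          omega)
    (fun ab hab => by
      obtain ⟨a, b⟩ := ab
      simp only [hP, Finset.mem_filter, Finset.mem_univ, true_and] at hab
      obtain ⟨h1, h2, h3⟩ := hab
      rw [f0, dif_pos ⟨h1, h2, hjn, h3, b.2⟩]
      dsimp only
      have hk1 : a.1 - i.1 - 1 < (Wi u i j).length := by rw [hWi]; omega
      have hk2 : (if j.1 < b.1 then b.1 - j.1 - 1 else u.length - 1 - j.1 + b.1)
          < (Wo u i j).length := by
        rw [hWo]; have := b.2; split <;> omega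
      have e1 : (Wi u i j).get ⟨a.1 - i.1 - 1, hk1⟩ = u[a.1]'a.2 := by
        rw [List.get_eq_getElem, getWi u]
        simp only [show i.1+1+(a.1-i.1-1) = a.1 from by omega]
      have e2 : (Wo u i j).get ⟨if j.1 < b.1 then b.1 - j.1 - 1
          else u.length - 1 - j.1 + b.1, hk2⟩ = u[b.1]'b.2 := by
        rw [List.get_eq_getElem]
        rcases h3 with h | h
        · simp only [if_pos h]
          rw [getWoLo u (by rw [hWo]; have := b.2; omega) (by have := b.2; omega)]
          simp only [show j.1+1+(b.1-j.1-1) = b.1 from by omega]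
        · simp only [if_neg (show ¬ (j.1 < b.1) from by omega)]
          rw [getWoHi u (by rw [hWo]; omega) (by omega) hjn]
          simp only [show u.length - 1 - j.1 + b.1 - (u.length - 1 - j.1) = b.1 from by omega]
      rw [e1, e2]
      simp only [List.get_eq_getElem])

set_option maxHeartbeats 1000000 in
lemma S1 (u : List I) (i j : Fin u.length) (hij : i.1 < j.1) :
    ∑ a : Fin u.length, ∑ b : Fin u.length, f1 p c u i j a b
      = (kap p c u (u.get i) (u.get j) i j * sgn (wpar p (Wi u i j) * wpar p (Wo u i j))) •
          (Csub p).mkQ (brW p c (Wo u i j) (Wi u i j)) := by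
  classical
  rw [brW_mkQ]
  simp only [Finset.smul_sum]
  rw [show (∑ a : Fin u.length, ∑ b : Fin u.length, f1 p c u i j a b)
      = ∑ ab : Fin u.length × Fin u.length, f1 p c u i j ab.1 ab.2 from
    (Fintype.sum_prod_type (f := fun ab : Fin u.length × Fin u.length =>
      f1 p c u (i : ℕ) (j : ℕ) ab.1 ab.2)).symm]
  rw [show (∑ k : Fin (Wo u i j).length, ∑ l : Fin (Wi u i j).length,
        (kap p c u (u.get i) (u.get j) i j * sgn (wpar p (Wi u i j) * wpar p (Wo u i j))) •
          cterm p c ((Wo u i j).get k) ((Wi u i j).get l) (Wo u i j) (Wi u i j) k l)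
      = ∑ kl : Fin (Wo u i j).length × Fin (Wi u i j).length,
        (kap p c u (u.get i) (u.get j) i j * sgn (wpar p (Wi u i j) * wpar p (Wo u i j))) •
          cterm p c ((Wo u i j).get kl.1) ((Wi u i j).get kl.2) (Wo u i j) (Wi u i j) kl.1 kl.2 from
    (Fintype.sum_prod_type (f := fun kl : Fin (Wo u i j).length × Fin (Wi u i j).length =>
      (kap p c u (u.get i) (u.get j) i j * sgn (wpar p (Wi u i j) * wpar p (Wo u i j))) •
        cterm p c ((Wo u i j).get kl.1) ((Wi u i j).get kl.2) (Wo u i j) (Wi u i j) kl.1 kl.2)).symm]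
  set P : Fin u.length × Fin u.length → Prop :=
    fun ab => i.1 < ab.2.1 ∧ ab.2.1 < j.1 ∧ (j.1 < ab.1.1 ∨ ab.1.1 < i.1) with hP
  rw [← Finset.sum_filter_of_ne (p := P) (by
    intro ab _ hne
    by_contra hc
    exact hne (dif_neg (by simp [hP] at hc; omega)))]
  have hjn : j.1 < u.length := j.2
  have hin : i.1 < u.length := i.2
  have hWi : (Wi u i j).length = j.1 - i.1 - 1 := lenWi u hjn
  have hWo : (Wo u i j).length = u.length - 1 - j.1 + i.1 := lenWo' u (le_of_lt hin) hjn
  refine Finset.sum_bij'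
    (fun ab hab => ((⟨if j.1 < ab.1.1 then ab.1.1 - j.1 - 1 else u.length - 1 - j.1 + ab.1.1, by
        have hh := hWo; have ha := ab.1.2; simp [hP, Finset.mem_filter] at hab
        split <;> omega⟩ : Fin (Wo u i j).length),
      (⟨ab.2.1 - i.1 - 1, by
        have hh := hWi; have hb := ab.2.2; simp [hP, Finset.mem_filter] at hab
        omega⟩ : Fin (Wi u i j).length)))
    (fun kl _ => ((⟨if kl.1.1 < u.length - 1 - j.1 then j.1 + 1 + kl.1.1
          else kl.1.1 - (u.length - 1 - j.1), by
        have := lt_of_lt_of_eq kl.1.2 hWo; split <;> omega⟩ : Fin u.length),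
      (⟨i.1 + 1 + kl.2.1, by have := lt_of_lt_of_eq kl.2.2 hWi; omega⟩ : Fin u.length)))
    (fun ab hab => Finset.mem_univ _)
    (fun kl _ => by
      have h1 := lt_of_lt_of_eq kl.1.2 hWo; have h2 := lt_of_lt_of_eq kl.2.2 hWi
      simp only [Finset.mem_filter, Finset.mem_univ, true_and, hP]
      refine ⟨by omega, by omega, ?_⟩
      split <;> omega)
    (fun ab hab => by
      simp only [hP, Finset.mem_filter, Finset.mem_univ, true_and] at hab
      have ha2 := ab.1.2
      ext
      · simp only []
        rcases hab.2.2 with h | h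
        · rw [if_pos h, if_pos (show (ab.1.1 - j.1 - 1 : ℕ) < u.length - 1 - j.1 from by omega)]
          omega
        · rw [if_neg (show ¬ (j.1 < ab.1.1) from by omega),
            if_neg (show ¬ (u.length - 1 - j.1 + ab.1.1 < u.length - 1 - j.1) from by omega)]
          omega
      · simp; omega)
    (fun kl _ => by
      have h1 := lt_of_lt_of_eq kl.1.2 hWo; have h2 := lt_of_lt_of_eq kl.2.2 hWi
      ext
      · simp only []
        rcases Nat.lt_or_ge kl.1.1 (u.length - 1 - j.1) with h | h
        · rw [if_pos (show kl.1.1 < u.length - 1 - j.1 from h),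
            if_pos (show j.1 < j.1 + 1 + kl.1.1 from by omega)]
          omega
        · rw [if_neg (show ¬ (kl.1.1 < u.length - 1 - j.1) from not_lt.2 h),
            if_neg (show ¬ (j.1 < kl.1.1 - (u.length - 1 - j.1)) from by omega)]
          omega
      · simp; omega)
    (fun ab hab => by
      obtain ⟨a, b⟩ := ab
      simp only [hP, Finset.mem_filter, Finset.mem_univ, true_and] at hab
      obtain ⟨h1, h2, h3⟩ := hab
      rw [f1, dif_pos ⟨h1, h2, hjn, h3, a.2⟩]
      dsimp only
      have hk1 : (if j.1 < a.1 then a.1 - j.1 - 1 else u.length - 1 - j.1 + a.1)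
          < (Wo u i j).length := by
        rw [hWo]; have := a.2; split <;> omega
      have hk2 : b.1 - i.1 - 1 < (Wi u i j).length := by rw [hWi]; omega
      have e2 : (Wi u i j).get ⟨b.1 - i.1 - 1, hk2⟩ = u[b.1]'b.2 := by
        rw [List.get_eq_getElem, getWi u]
        simp only [show i.1+1+(b.1-i.1-1) = b.1 from by omega]
      have e1 : (Wo u i j).get ⟨if j.1 < a.1 then a.1 - j.1 - 1
          else u.length - 1 - j.1 + a.1, hk1⟩ = u[a.1]'a.2 := by
        rw [List.get_eq_getElem]
        rcases h3 with h | h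
        · simp only [if_pos h]
          rw [getWoLo u (by rw [hWo]; have := a.2; omega) (by have := a.2; omega)]
          simp only [show j.1+1+(a.1-j.1-1) = a.1 from by omega]
        · simp only [if_neg (show ¬ (j.1 < a.1) from by omega)]
          rw [getWoHi u (by rw [hWo]; omega) (by omega) hjn]
          simp only [show u.length - 1 - j.1 + a.1 - (u.length - 1 - j.1) = a.1 from by omega]
      rw [e1, e2]
      simp only [List.get_eq_getElem])

lemma Wi_def (u : List I) (i j : ℕ) : (u.drop (i+1)).take (j - i - 1) = Wi u i j := rfl
lemma Wo_def (u : List I) (i j : ℕ) : u.drop (j+1) ++ u.take i = Wo u i j := rfl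

set_option maxHeartbeats 1000000 in
lemma expand (u : List I) :
    (Csub p).mkQ (TensorProduct.lift (brkt p c) (cob p c (mono u))) =
      ∑ i : Fin u.length, ∑ j : Fin u.length, ∑ a : Fin u.length, ∑ b : Fin u.length,
        (f0 p c u i j a b + f1 p c u i j a b) := by
  rw [cob_mono, cobW, map_sum, map_sum]
  refine Finset.sum_congr rfl fun i _ => ?_
  rw [map_sum, map_sum]
  refine Finset.sum_congr rfl fun j _ => ?_
  by_cases hij : i.1 < j.1
  · rw [if_pos hij]
    simp only []
    simp only [map_smul, map_add, TensorProduct.lift.tmul, brkt_mono, Wi_def, Wo_def]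
    have hsum : ∑ a : Fin u.length, ∑ b : Fin u.length,
        (f0 p c u i j a b + f1 p c u i j a b)
        = (∑ a : Fin u.length, ∑ b : Fin u.length, f0 p c u i j a b)
          + ∑ a : Fin u.length, ∑ b : Fin u.length, f1 p c u i j a b := by
      rw [← Finset.sum_add_distrib]
      refine Finset.sum_congr rfl fun a _ => Finset.sum_add_distrib
    rw [hsum, S0 p c u i j hij, S1 p c u i j hij]
    simp only [kap, smul_add, smul_smul]
  · rw [if_neg hij]
    have hz : ∀ a b : Fin u.length, f0 p c u i j a b + f1 p c u i j a b = 0 := fun a b => by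
      rw [f0, dif_neg (by omega), f1, dif_neg (by omega), add_zero]
    simp only [hz, map_zero, Finset.sum_const_zero]

end Expand
section Core
variable {I : Type} (p : I → ZMod 2) (c : I → I → ℚ)

lemma take_of (v A B : List I) {m : ℕ} (hv : v = A ++ B) (hm : m = A.length) : v.take m = A := by
  rw [hv]; exact take_eq A B hm

lemma drop_of (v A B : List I) {m : ℕ} (hv : v = A ++ B) (hm : m = A.length) : v.drop m = B := by
  rw [hv]; exact drop_eq A B hm

lemma get_of (v A B : List I) (x : I) {m : ℕ} (hv : v = A ++ x :: B) (hm : m = A.length) :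
    ∀ (h : m < v.length), v[m] = x := by
  intro h
  have h2 : v.drop m = x :: B := drop_of v A (x :: B) hv hm
  have h3 := (List.drop_eq_getElem_cons h).symm.trans h2
  injection h3

lemma decomp4 (v : List I) (q1 q2 q3 q4 : ℕ) (h1 : q1 < q2) (h2 : q2 < q3) (h3 : q3 < q4)
    (h4 : q4 < v.length) :
    ∃ (P0 X1 X2 X3 X4 : List I) (x1 x2 x3 x4 : I),
      v = P0 ++ x1::X1 ++ x2::X2 ++ x3::X3 ++ x4::X4 ∧
      P0.length = q1 ∧ X1.length = q2-q1-1 ∧ X2.length = q3-q2-1 ∧ X3.length = q4-q3-1 ∧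
      X4.length = v.length-q4-1 := by
  have e0 : v = v.take q1 ++ v.drop q1 := (List.take_append_drop _ _).symm
  have e1 : v.drop q1 = v[q1]'(by omega) :: v.drop (q1+1) := List.drop_eq_getElem_cons (by omega)
  have e2 : v.drop (q1+1) = (v.drop (q1+1)).take (q2-q1-1) ++ v.drop q2 := by
    conv_lhs => rw [← List.take_append_drop (q2-q1-1) (v.drop (q1+1))]
    rw [List.drop_drop]
    congr 2
    omega
  have e3 : v.drop q2 = v[q2]'(by omega) :: v.drop (q2+1) := List.drop_eq_getElem_cons (by omega)
  have e4 : v.drop (q2+1) = (v.drop (q2+1)).take (q3-q2-1) ++ v.drop q3 := by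
    conv_lhs => rw [← List.take_append_drop (q3-q2-1) (v.drop (q2+1))]
    rw [List.drop_drop]
    congr 2
    omega
  have e5 : v.drop q3 = v[q3]'(by omega) :: v.drop (q3+1) := List.drop_eq_getElem_cons (by omega)
  have e6 : v.drop (q3+1) = (v.drop (q3+1)).take (q4-q3-1) ++ v.drop q4 := by
    conv_lhs => rw [← List.take_append_drop (q4-q3-1) (v.drop (q3+1))]
    rw [List.drop_drop]
    congr 2
    omega
  have e7 : v.drop q4 = v[q4]'h4 :: v.drop (q4+1) := List.drop_eq_getElem_cons h4
  refine ⟨v.take q1, (v.drop (q1+1)).take (q2-q1-1), (v.drop (q2+1)).take (q3-q2-1),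
    (v.drop (q3+1)).take (q4-q3-1), v.drop (q4+1), v[q1]'(by omega), v[q2]'(by omega),
    v[q3]'(by omega), v[q4]'h4, ?_, by simp; omega, by simp; omega, by simp; omega, by simp; omega,
    by simp; omega⟩
  conv_lhs => rw [e0, e1, e2, e3, e4, e5, e6, e7]
  simp [List.append_assoc, List.cons_append]
lemma scal_main (q r : ℚ) (A B R C D : ZMod 2) (h : A + B + R + (C + D) = 1) :
    1/2 * sgn A * q * (sgn B * r * sgn R) = -(1/2 * sgn C * r * (sgn D * q)) := by
  have hs : sgn (A + B + R) = - sgn (C + D) := sgn_flip (by linear_combination h)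
  rw [sgn_add, sgn_add, sgn_add] at hs
  linear_combination (q * r * (1/2)) * hs

set_option maxHeartbeats 1600000 in
lemma core_AB (hodd : ∀ i j, p i = p j → c i j = 0) (hsym : ∀ i j, c i j = c j i)
    (u P0 X1 X2 X3 X4 : List I) (x1 x2 x3 x4 : I) (i a j b : ℕ)
    (hu : u = P0 ++ x1::X1 ++ x2::X2 ++ x3::X3 ++ x4::X4)
    (hi : i = P0.length) (ha : a = i + 1 + X1.length) (hj : j = a + 1 + X2.length)
    (hb : b = j + 1 + X3.length) :
    f0 p c u a b j i = - f0 p c u i j a b := by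
  have hn : u.length = b + 1 + X4.length := by rw [hu]; simp; omega
  have g1 : ∀ h : i < u.length, u[i] = x1 :=
    get_of u P0 (X1 ++ x2::X2 ++ x3::X3 ++ x4::X4) x1
      (by rw [hu]; try simp [List.append_assoc, List.cons_append]) hi
  have g2 : ∀ h : a < u.length, u[a] = x2 :=
    get_of u (P0 ++ x1::X1) (X2 ++ x3::X3 ++ x4::X4) x2
      (by rw [hu]; try simp [List.append_assoc, List.cons_append]) (by simp; omega)
  have g3 : ∀ h : j < u.length, u[j] = x3 :=
    get_of u (P0 ++ x1::X1 ++ x2::X2) (X3 ++ x4::X4) x3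
      (by rw [hu]; try simp [List.append_assoc, List.cons_append]) (by simp; omega)
  have g4 : ∀ h : b < u.length, u[b] = x4 :=
    get_of u (P0 ++ x1::X1 ++ x2::X2 ++ x3::X3) X4 x4
      (by rw [hu]; try simp [List.append_assoc, List.cons_append]) (by simp; omega)
  have ti : u.take i = P0 :=
    take_of u P0 (x1::X1 ++ x2::X2 ++ x3::X3 ++ x4::X4)
      (by rw [hu]; try simp [List.append_assoc, List.cons_append]) hi
  have ti1 : u.take (i+1) = P0 ++ [x1] :=
    take_of u (P0 ++ [x1]) (X1 ++ x2::X2 ++ x3::X3 ++ x4::X4)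
      (by rw [hu]; try simp [List.append_assoc, List.cons_append]) (by simp; omega)
  have tj1 : u.take (j+1) = P0 ++ x1::X1 ++ x2::X2 ++ [x3] :=
    take_of u (P0 ++ x1::X1 ++ x2::X2 ++ [x3]) (X3 ++ x4::X4)
      (by rw [hu]; try simp [List.append_assoc, List.cons_append]) (by simp; omega)
  have di1 : u.drop (i+1) = X1 ++ x2::X2 ++ x3::X3 ++ x4::X4 :=
    drop_of u (P0 ++ [x1]) (X1 ++ x2::X2 ++ x3::X3 ++ x4::X4)
      (by rw [hu]; try simp [List.append_assoc, List.cons_append]) (by simp; omega)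
  have dj1 : u.drop (j+1) = X3 ++ x4::X4 :=
    drop_of u (P0 ++ x1::X1 ++ x2::X2 ++ [x3]) (X3 ++ x4::X4)
      (by rw [hu]; try simp [List.append_assoc, List.cons_append]) (by simp; omega)
  have ta : u.take a = P0 ++ x1::X1 :=
    take_of u (P0 ++ x1::X1) (x2::X2 ++ x3::X3 ++ x4::X4)
      (by rw [hu]; try simp [List.append_assoc, List.cons_append]) (by simp; omega)
  have ta1 : u.take (a+1) = P0 ++ x1::X1 ++ [x2] :=
    take_of u (P0 ++ x1::X1 ++ [x2]) (X2 ++ x3::X3 ++ x4::X4)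
      (by rw [hu]; try simp [List.append_assoc, List.cons_append]) (by simp; omega)
  have tb1 : u.take (b+1) = P0 ++ x1::X1 ++ x2::X2 ++ x3::X3 ++ [x4] :=
    take_of u (P0 ++ x1::X1 ++ x2::X2 ++ x3::X3 ++ [x4]) X4
      (by rw [hu]; try simp [List.append_assoc, List.cons_append]) (by simp; omega)
  have da1 : u.drop (a+1) = X2 ++ x3::X3 ++ x4::X4 :=
    drop_of u (P0 ++ x1::X1 ++ [x2]) (X2 ++ x3::X3 ++ x4::X4)
      (by rw [hu]; try simp [List.append_assoc, List.cons_append]) (by simp; omega)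
  have db1 : u.drop (b+1) = X4 :=
    drop_of u (P0 ++ x1::X1 ++ x2::X2 ++ x3::X3 ++ [x4]) X4
      (by rw [hu]; try simp [List.append_assoc, List.cons_append]) (by simp; omega)
  have hWiR : Wi u i j = X1 ++ x2::X2 := by
    rw [Wi, di1]
    exact take_of _ (X1 ++ x2::X2) (x3::X3 ++ x4::X4)
      (by simp [List.append_assoc, List.cons_append]) (by simp; omega)
  have hWoR : Wo u i j = X3 ++ x4::X4 ++ P0 := by
    rw [Wo, dj1, ti]
  have hWiL : Wi u a b = X2 ++ x3::X3 := by
    rw [Wi, da1]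
    exact take_of _ (X2 ++ x3::X3) (x4::X4)
      (by simp [List.append_assoc, List.cons_append]) (by simp; omega)
  have hWoL : Wo u a b = X4 ++ (P0 ++ x1::X1) := by
    rw [Wo, db1, ta]
  have tk : (X1 ++ x2::X2).take (a-i-1) = X1 := take_of _ X1 (x2::X2) rfl (by omega)
  have dk : (X1 ++ x2::X2).drop (a-i-1+1) = X2 :=
    drop_of _ (X1 ++ [x2]) X2 (by simp [List.append_assoc, List.cons_append]) (by simp; omega)
  have tl : (X3 ++ x4::X4 ++ P0).take (b-j-1) = X3 :=
    take_of _ X3 (x4::X4 ++ P0) (by simp [List.append_assoc, List.cons_append]) (by omega)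
  have dl : (X3 ++ x4::X4 ++ P0).drop (b-j-1+1) = X4 ++ P0 :=
    drop_of _ (X3 ++ [x4]) (X4 ++ P0) (by simp [List.append_assoc, List.cons_append])
      (by simp; omega)
  have tk' : (X2 ++ x3::X3).take (j-a-1) = X2 := take_of _ X2 (x3::X3) rfl (by omega)
  have dk' : (X2 ++ x3::X3).drop (j-a-1+1) = X3 :=
    drop_of _ (X2 ++ [x3]) X3 (by simp [List.append_assoc, List.cons_append]) (by simp; omega)
  have tl' : (X4 ++ (P0 ++ x1::X1)).take (u.length - 1 - b + i) = X4 ++ P0 :=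
    take_of _ (X4 ++ P0) (x1::X1) (by simp [List.append_assoc, List.cons_append])
      (by simp; omega)
  have dl' : (X4 ++ (P0 ++ x1::X1)).drop (u.length - 1 - b + i + 1) = X1 :=
    drop_of _ (X4 ++ P0 ++ [x1]) X1 (by simp [List.append_assoc, List.cons_append])
      (by simp; omega)
  simp only [f0]
  rw [dif_pos (show a < j ∧ j < b ∧ b < u.length ∧ (b < i ∨ i < a) ∧ i < u.length from
      by omega),
    dif_pos (show i < a ∧ a < j ∧ j < u.length ∧ (j < b ∨ b < i) ∧ b < u.length from
      by omega)]
  rw [if_neg (show ¬ (b < i) from by omega), if_pos (show j < b from by omega)]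
  simp only [kap, cterm, cutRot]
  simp only [g1, g2, g3, g4]
  rw [hWiR, hWoR, hWiL, hWoL]
  rw [ti, ti1, tj1, dj1, ta, ta1, tb1, db1]
  rw [tk, dk, tl, dl, tk', dk', tl', dl']
  simp only [wpar_append, wpar_cons, wpar_nil, add_zero]
  rw [show X3 ++ X2 ++ (X1 ++ (X4 ++ P0)) = X3 ++ (X2 ++ (X1 ++ (X4 ++ P0))) from by
      simp [List.append_assoc],
    show X2 ++ X1 ++ (X4 ++ P0 ++ X3) = (X2 ++ (X1 ++ (X4 ++ P0))) ++ X3 from by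
      simp [List.append_assoc],
    mkQ_rot p X3 (X2 ++ (X1 ++ (X4 ++ P0)))]
  simp only [smul_smul, ← neg_smul, wpar_append]
  congr 1
  by_cases hc1 : c x1 x3 = 0
  · rw [hsym x3 x1, hc1]; ring
  by_cases hc2 : c x2 x4 = 0
  · rw [hc2]; ring
  have e13 : p x1 + p x3 = 1 := zmod2_ne (fun h => hc1 (hodd _ _ h))
  have e24 : p x2 + p x4 = 1 := zmod2_ne (fun h => hc2 (hodd _ _ h))
  rw [hsym x3 x1]
  apply scal_main
  revert e13 e24
  generalize p x1 = e1
  generalize p x2 = e2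
  generalize p x3 = e3
  generalize p x4 = e4
  generalize wpar p P0 = y0
  generalize wpar p X1 = y1
  generalize wpar p X2 = y2
  generalize wpar p X3 = y3
  generalize wpar p X4 = y4
  revert e1 e2 e3 e4 y0 y1 y2 y3 y4
  decide
lemma scal_main2 (q r : ℚ) (A E B R C F D : ZMod 2) (h : A + E + B + R + (C + F + D) = 1) :
    1/2 * sgn A * q * sgn E * (sgn B * r * sgn R) = -(1/2 * sgn C * r * sgn F * (sgn D * q)) := by
  have hs : sgn (A + E + B + R) = - sgn (C + F + D) := sgn_flip (by linear_combination h)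
  rw [sgn_add, sgn_add, sgn_add, sgn_add, sgn_add] at hs
  linear_combination (q * r * (1/2)) * hs

set_option maxHeartbeats 1600000 in
lemma core_CD (hodd : ∀ i j, p i = p j → c i j = 0) (hsym : ∀ i j, c i j = c j i)
    (u P0 X1 X2 X3 X4 : List I) (x1 x2 x3 x4 : I) (i b j a : ℕ)
    (hu : u = P0 ++ x1::X1 ++ x2::X2 ++ x3::X3 ++ x4::X4)
    (hi : i = P0.length) (hb : b = i + 1 + X1.length) (hj : j = b + 1 + X2.length)
    (ha : a = j + 1 + X3.length) :
    f1 p c u b a i j = - f1 p c u i j a b := by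
  have hn : u.length = a + 1 + X4.length := by rw [hu]; simp; omega
  have g1 : ∀ h : i < u.length, u[i] = x1 :=
    get_of u P0 (X1 ++ x2::X2 ++ x3::X3 ++ x4::X4) x1
      (by rw [hu]; try simp [List.append_assoc, List.cons_append]) hi
  have g2 : ∀ h : b < u.length, u[b] = x2 :=
    get_of u (P0 ++ x1::X1) (X2 ++ x3::X3 ++ x4::X4) x2
      (by rw [hu]; try simp [List.append_assoc, List.cons_append]) (by simp; omega)
  have g3 : ∀ h : j < u.length, u[j] = x3 :=
    get_of u (P0 ++ x1::X1 ++ x2::X2) (X3 ++ x4::X4) x3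
      (by rw [hu]; try simp [List.append_assoc, List.cons_append]) (by simp; omega)
  have g4 : ∀ h : a < u.length, u[a] = x4 :=
    get_of u (P0 ++ x1::X1 ++ x2::X2 ++ x3::X3) X4 x4
      (by rw [hu]; try simp [List.append_assoc, List.cons_append]) (by simp; omega)
  have ti : u.take i = P0 :=
    take_of u P0 (x1::X1 ++ x2::X2 ++ x3::X3 ++ x4::X4)
      (by rw [hu]; try simp [List.append_assoc, List.cons_append]) hi
  have ti1 : u.take (i+1) = P0 ++ [x1] :=
    take_of u (P0 ++ [x1]) (X1 ++ x2::X2 ++ x3::X3 ++ x4::X4)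
      (by rw [hu]; try simp [List.append_assoc, List.cons_append]) (by simp; omega)
  have tj1 : u.take (j+1) = P0 ++ x1::X1 ++ x2::X2 ++ [x3] :=
    take_of u (P0 ++ x1::X1 ++ x2::X2 ++ [x3]) (X3 ++ x4::X4)
      (by rw [hu]; try simp [List.append_assoc, List.cons_append]) (by simp; omega)
  have di1 : u.drop (i+1) = X1 ++ x2::X2 ++ x3::X3 ++ x4::X4 :=
    drop_of u (P0 ++ [x1]) (X1 ++ x2::X2 ++ x3::X3 ++ x4::X4)
      (by rw [hu]; try simp [List.append_assoc, List.cons_append]) (by simp; omega)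
  have dj1 : u.drop (j+1) = X3 ++ x4::X4 :=
    drop_of u (P0 ++ x1::X1 ++ x2::X2 ++ [x3]) (X3 ++ x4::X4)
      (by rw [hu]; try simp [List.append_assoc, List.cons_append]) (by simp; omega)
  have tb : u.take b = P0 ++ x1::X1 :=
    take_of u (P0 ++ x1::X1) (x2::X2 ++ x3::X3 ++ x4::X4)
      (by rw [hu]; try simp [List.append_assoc, List.cons_append]) (by simp; omega)
  have tb1 : u.take (b+1) = P0 ++ x1::X1 ++ [x2] :=
    take_of u (P0 ++ x1::X1 ++ [x2]) (X2 ++ x3::X3 ++ x4::X4)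
      (by rw [hu]; try simp [List.append_assoc, List.cons_append]) (by simp; omega)
  have ta1 : u.take (a+1) = P0 ++ x1::X1 ++ x2::X2 ++ x3::X3 ++ [x4] :=
    take_of u (P0 ++ x1::X1 ++ x2::X2 ++ x3::X3 ++ [x4]) X4
      (by rw [hu]; try simp [List.append_assoc, List.cons_append]) (by simp; omega)
  have db1 : u.drop (b+1) = X2 ++ x3::X3 ++ x4::X4 :=
    drop_of u (P0 ++ x1::X1 ++ [x2]) (X2 ++ x3::X3 ++ x4::X4)
      (by rw [hu]; try simp [List.append_assoc, List.cons_append]) (by simp; omega)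
  have da1 : u.drop (a+1) = X4 :=
    drop_of u (P0 ++ x1::X1 ++ x2::X2 ++ x3::X3 ++ [x4]) X4
      (by rw [hu]; try simp [List.append_assoc, List.cons_append]) (by simp; omega)
  have hWiR : Wi u i j = X1 ++ x2::X2 := by
    rw [Wi, di1]
    exact take_of _ (X1 ++ x2::X2) (x3::X3 ++ x4::X4)
      (by simp [List.append_assoc, List.cons_append]) (by simp; omega)
  have hWoR : Wo u i j = X3 ++ x4::X4 ++ P0 := by
    rw [Wo, dj1, ti]
  have hWiL : Wi u b a = X2 ++ x3::X3 := by
    rw [Wi, db1]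
    exact take_of _ (X2 ++ x3::X3) (x4::X4)
      (by simp [List.append_assoc, List.cons_append]) (by simp; omega)
  have hWoL : Wo u b a = X4 ++ (P0 ++ x1::X1) := by
    rw [Wo, da1, tb]
  have tkR : (X3 ++ x4::X4 ++ P0).take (a-j-1) = X3 :=
    take_of _ X3 (x4::X4 ++ P0) (by simp [List.append_assoc, List.cons_append]) (by omega)
  have dkR : (X3 ++ x4::X4 ++ P0).drop (a-j-1+1) = X4 ++ P0 :=
    drop_of _ (X3 ++ [x4]) (X4 ++ P0) (by simp [List.append_assoc, List.cons_append])
      (by simp; omega)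
  have tlR : (X1 ++ x2::X2).take (b-i-1) = X1 := take_of _ X1 (x2::X2) rfl (by omega)
  have dlR : (X1 ++ x2::X2).drop (b-i-1+1) = X2 :=
    drop_of _ (X1 ++ [x2]) X2 (by simp [List.append_assoc, List.cons_append]) (by simp; omega)
  have tkL : (X4 ++ (P0 ++ x1::X1)).take (u.length - 1 - a + i) = X4 ++ P0 :=
    take_of _ (X4 ++ P0) (x1::X1) (by simp [List.append_assoc, List.cons_append])
      (by simp; omega)
  have dkL : (X4 ++ (P0 ++ x1::X1)).drop (u.length - 1 - a + i + 1) = X1 :=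
    drop_of _ (X4 ++ P0 ++ [x1]) X1 (by simp [List.append_assoc, List.cons_append])
      (by simp; omega)
  have tlL : (X2 ++ x3::X3).take (j-b-1) = X2 := take_of _ X2 (x3::X3) rfl (by omega)
  have dlL : (X2 ++ x3::X3).drop (j-b-1+1) = X3 :=
    drop_of _ (X2 ++ [x3]) X3 (by simp [List.append_assoc, List.cons_append]) (by simp; omega)
  simp only [f1]
  rw [dif_pos (show b < j ∧ j < a ∧ a < u.length ∧ (a < i ∨ i < b) ∧ i < u.length from
      by omega),
    dif_pos (show i < b ∧ b < j ∧ j < u.length ∧ (j < a ∨ a < i) ∧ a < u.length from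
      by omega)]
  rw [if_neg (show ¬ (a < i) from by omega), if_pos (show j < a from by omega)]
  simp only [kap, cterm, cutRot]
  simp only [g1, g2, g3, g4]
  rw [hWiR, hWoR, hWiL, hWoL]
  rw [ti, ti1, tj1, dj1, tb, tb1, ta1, da1]
  rw [tkR, dkR, tlR, dlR, tkL, dkL, tlL, dlL]
  simp only [wpar_append, wpar_cons, wpar_nil, add_zero]
  rw [show X1 ++ (X4 ++ P0) ++ (X3 ++ X2) = X1 ++ (X4 ++ (P0 ++ (X3 ++ X2))) from by
      simp [List.append_assoc],
    show X4 ++ P0 ++ X3 ++ (X2 ++ X1) = (X4 ++ (P0 ++ (X3 ++ X2))) ++ X1 from by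
      simp [List.append_assoc],
    mkQ_rot p X1 (X4 ++ (P0 ++ (X3 ++ X2)))]
  simp only [smul_smul, ← neg_smul, wpar_append]
  congr 1
  by_cases hc1 : c x1 x3 = 0
  · rw [hc1]; ring
  by_cases hc2 : c x2 x4 = 0
  · rw [hsym x4 x2, hc2]; ring
  have e13 : p x1 + p x3 = 1 := zmod2_ne (fun h => hc1 (hodd _ _ h))
  have e24 : p x2 + p x4 = 1 := zmod2_ne (fun h => hc2 (hodd _ _ h))
  rw [hsym x4 x2]
  apply scal_main2
  revert e13 e24
  generalize p x1 = e1
  generalize p x2 = e2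
  generalize p x3 = e3
  generalize p x4 = e4
  generalize wpar p P0 = y0
  generalize wpar p X1 = y1
  generalize wpar p X2 = y2
  generalize wpar p X3 = y3
  generalize wpar p X4 = y4
  revert e1 e2 e3 e4 y0 y1 y2 y3 y4
  decide

end Core
def phi {n : ℕ} (σ : (Fin n × Fin n) × (Fin n × Fin n)) : (Fin n × Fin n) × (Fin n × Fin n) :=
  if σ.1.1.1 < σ.2.1.1 ∧ σ.2.1.1 < σ.1.2.1 ∧ σ.1.2.1 < σ.2.2.1 then
    ((σ.2.1, σ.2.2), (σ.1.2, σ.1.1))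
  else if σ.2.2.1 < σ.1.1.1 ∧ σ.1.1.1 < σ.2.1.1 ∧ σ.2.1.1 < σ.1.2.1 then
    ((σ.2.2, σ.2.1), (σ.1.1, σ.1.2))
  else if σ.1.1.1 < σ.2.2.1 ∧ σ.2.2.1 < σ.1.2.1 ∧ σ.1.2.1 < σ.2.1.1 then
    ((σ.2.2, σ.2.1), (σ.1.1, σ.1.2))
  else if σ.2.1.1 < σ.1.1.1 ∧ σ.1.1.1 < σ.2.2.1 ∧ σ.2.2.1 < σ.1.2.1 then
    ((σ.2.1, σ.2.2), (σ.1.2, σ.1.1))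
  else σ

section Final
variable {I : Type} (p : I → ZMod 2) (c : I → I → ℚ)

/-- the total term of one configuration -/
noncomputable def FF (u : List I) (σ : (Fin u.length × Fin u.length) × (Fin u.length × Fin u.length)) :
    FA I ⧸ Csub p :=
  f0 p c u σ.1.1 σ.1.2 σ.2.1 σ.2.2 + f1 p c u σ.1.1 σ.1.2 σ.2.1 σ.2.2

lemma phi_evalA {n : ℕ} (i j a b : Fin n) (h : i.1 < a.1 ∧ a.1 < j.1 ∧ j.1 < b.1) :
    phi ((i,j),(a,b)) = ((a,b),(j,i)) := by
  simp only [phi]; rw [if_pos h]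

lemma phi_evalB {n : ℕ} (i j a b : Fin n) (h : b.1 < i.1 ∧ i.1 < a.1 ∧ a.1 < j.1) :
    phi ((i,j),(a,b)) = ((b,a),(i,j)) := by
  simp only [phi]; rw [if_neg (by omega), if_pos h]

lemma phi_evalC {n : ℕ} (i j a b : Fin n) (h : i.1 < b.1 ∧ b.1 < j.1 ∧ j.1 < a.1) :
    phi ((i,j),(a,b)) = ((b,a),(i,j)) := by
  simp only [phi]; rw [if_neg (by omega), if_neg (by omega), if_pos h]

lemma phi_evalD {n : ℕ} (i j a b : Fin n) (h : a.1 < i.1 ∧ i.1 < b.1 ∧ b.1 < j.1) :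
    phi ((i,j),(a,b)) = ((a,b),(j,i)) := by
  simp only [phi]; rw [if_neg (by omega), if_neg (by omega), if_neg (by omega), if_pos h]

lemma phi_evalE {n : ℕ} (i j a b : Fin n)
    (h1 : ¬ (i.1 < a.1 ∧ a.1 < j.1 ∧ j.1 < b.1)) (h2 : ¬ (b.1 < i.1 ∧ i.1 < a.1 ∧ a.1 < j.1))
    (h3 : ¬ (i.1 < b.1 ∧ b.1 < j.1 ∧ j.1 < a.1)) (h4 : ¬ (a.1 < i.1 ∧ i.1 < b.1 ∧ b.1 < j.1)) :
    phi ((i,j),(a,b)) = ((i,j),(a,b)) := by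
  simp only [phi]; rw [if_neg h1, if_neg h2, if_neg h3, if_neg h4]

set_option maxHeartbeats 1600000 in
lemma cancel (hodd : ∀ i j, p i = p j → c i j = 0) (hsym : ∀ i j, c i j = c j i) (u : List I)
    (σ : (Fin u.length × Fin u.length) × (Fin u.length × Fin u.length)) :
    FF p c u σ + FF p c u (phi σ) = 0 := by
  obtain ⟨⟨i, j⟩, ⟨a, b⟩⟩ := σ
  by_cases hA : i.1 < a.1 ∧ a.1 < j.1 ∧ j.1 < b.1
  · rw [phi_evalA i j a b hA]
    obtain ⟨P0, X1, X2, X3, X4, x1, x2, x3, x4, hu, l0, l1, l2, l3, l4⟩ :=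
      decomp4 u i a j b (by omega) (by omega) (by omega) b.2
    have hc := core_AB p c hodd hsym u P0 X1 X2 X3 X4 x1 x2 x3 x4 i a j b hu
      (by omega) (by omega) (by omega) (by omega)
    simp only [FF]
    rw [show f1 p c u i j a b = 0 from by rw [f1, dif_neg (by omega)],
      show f1 p c u a b j i = 0 from by rw [f1, dif_neg (by omega)],
      add_zero, add_zero, hc]
    exact add_neg_cancel _
  by_cases hB : b.1 < i.1 ∧ i.1 < a.1 ∧ a.1 < j.1
  · rw [phi_evalB i j a b hB]
    obtain ⟨P0, X1, X2, X3, X4, x1, x2, x3, x4, hu, l0, l1, l2, l3, l4⟩ :=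
      decomp4 u b i a j (by omega) (by omega) (by omega) j.2
    have hc := core_AB p c hodd hsym u P0 X1 X2 X3 X4 x1 x2 x3 x4 b i a j hu
      (by omega) (by omega) (by omega) (by omega)
    simp only [FF]
    rw [show f1 p c u i j a b = 0 from by rw [f1, dif_neg (by omega)],
      show f1 p c u b a i j = 0 from by rw [f1, dif_neg (by omega)],
      add_zero, add_zero, hc]
    exact neg_add_cancel _
  by_cases hC : i.1 < b.1 ∧ b.1 < j.1 ∧ j.1 < a.1
  · rw [phi_evalC i j a b hC]
    obtain ⟨P0, X1, X2, X3, X4, x1, x2, x3, x4, hu, l0, l1, l2, l3, l4⟩ :=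
      decomp4 u i b j a (by omega) (by omega) (by omega) a.2
    have hc := core_CD p c hodd hsym u P0 X1 X2 X3 X4 x1 x2 x3 x4 i b j a hu
      (by omega) (by omega) (by omega) (by omega)
    simp only [FF]
    rw [show f0 p c u i j a b = 0 from by rw [f0, dif_neg (by omega)],
      show f0 p c u b a i j = 0 from by rw [f0, dif_neg (by omega)],
      zero_add, zero_add, hc]
    exact add_neg_cancel _
  by_cases hD : a.1 < i.1 ∧ i.1 < b.1 ∧ b.1 < j.1
  · rw [phi_evalD i j a b hD]
    obtain ⟨P0, X1, X2, X3, X4, x1, x2, x3, x4, hu, l0, l1, l2, l3, l4⟩ :=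
      decomp4 u a i b j (by omega) (by omega) (by omega) j.2
    have hc := core_CD p c hodd hsym u P0 X1 X2 X3 X4 x1 x2 x3 x4 a i b j hu
      (by omega) (by omega) (by omega) (by omega)
    simp only [FF]
    rw [show f0 p c u i j a b = 0 from by rw [f0, dif_neg (by omega)],
      show f0 p c u a b j i = 0 from by rw [f0, dif_neg (by omega)],
      zero_add, zero_add, hc]
    exact neg_add_cancel _
  · rw [phi_evalE i j a b hA hB hC hD]
    simp only [FF]
    rw [show f0 p c u i j a b = 0 from by rw [f0, dif_neg (by omega)],
      show f1 p c u i j a b = 0 from by rw [f1, dif_neg (by omega)]]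
    simp

lemma FF_ne_phi (u : List I) (σ : (Fin u.length × Fin u.length) × (Fin u.length × Fin u.length))
    (h : FF p c u σ ≠ 0) : phi σ ≠ σ := by
  obtain ⟨⟨i, j⟩, ⟨a, b⟩⟩ := σ
  have hval : (i.1 < a.1 ∧ a.1 < j.1 ∧ j.1 < b.1) ∨ (b.1 < i.1 ∧ i.1 < a.1 ∧ a.1 < j.1)
      ∨ (i.1 < b.1 ∧ b.1 < j.1 ∧ j.1 < a.1) ∨ (a.1 < i.1 ∧ i.1 < b.1 ∧ b.1 < j.1) := by
    by_contra hcon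
    push_neg at hcon
    apply h
    simp only [FF]
    rw [show f0 p c u i j a b = 0 from by rw [f0, dif_neg (by omega)],
      show f1 p c u i j a b = 0 from by rw [f1, dif_neg (by omega)]]
    simp
  rcases hval with hA | hB | hC | hD
  · rw [phi_evalA i j a b hA]; intro heq
    simp only [Prod.ext_iff, Fin.ext_iff] at heq; omega
  · rw [phi_evalB i j a b hB]; intro heq
    simp only [Prod.ext_iff, Fin.ext_iff] at heq; omega
  · rw [phi_evalC i j a b hC]; intro heq
    simp only [Prod.ext_iff, Fin.ext_iff] at heq; omega
  · rw [phi_evalD i j a b hD]; intro heq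
    simp only [Prod.ext_iff, Fin.ext_iff] at heq; omega

lemma phi_invol {n : ℕ} (σ : (Fin n × Fin n) × (Fin n × Fin n)) : phi (phi σ) = σ := by
  obtain ⟨⟨i, j⟩, ⟨a, b⟩⟩ := σ
  by_cases hA : i.1 < a.1 ∧ a.1 < j.1 ∧ j.1 < b.1
  · rw [phi_evalA i j a b hA, phi_evalB a b j i (by omega)]
  by_cases hB : b.1 < i.1 ∧ i.1 < a.1 ∧ a.1 < j.1
  · rw [phi_evalB i j a b hB, phi_evalA b a i j (by omega)]
  by_cases hC : i.1 < b.1 ∧ b.1 < j.1 ∧ j.1 < a.1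
  · rw [phi_evalC i j a b hC, phi_evalD b a i j (by omega)]
  by_cases hD : a.1 < i.1 ∧ i.1 < b.1 ∧ b.1 < j.1
  · rw [phi_evalD i j a b hD, phi_evalC a b j i (by omega)]
  · rw [phi_evalE i j a b hA hB hC hD, phi_evalE i j a b hA hB hC hD]

lemma nest {M : Type} [AddCommMonoid M] (n : ℕ) (F : Fin n → Fin n → Fin n → Fin n → M) :
    ∑ σ : (Fin n × Fin n) × (Fin n × Fin n), F σ.1.1 σ.1.2 σ.2.1 σ.2.2
      = ∑ i : Fin n, ∑ j : Fin n, ∑ a : Fin n, ∑ b : Fin n, F i j a b := by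
  rw [Fintype.sum_prod_type (f := fun σ : (Fin n × Fin n) × (Fin n × Fin n) =>
    F σ.1.1 σ.1.2 σ.2.1 σ.2.2)]
  rw [Fintype.sum_prod_type (f := fun x : Fin n × Fin n =>
    ∑ y : Fin n × Fin n, F x.1 x.2 y.1 y.2)]
  refine Finset.sum_congr rfl fun i _ => Finset.sum_congr rfl fun j _ => ?_
  exact Fintype.sum_prod_type (f := fun y : Fin n × Fin n => F i j y.1 y.2)

end Final
theorem bracket_cobracket_involutive
    (I : Type) (p : I → ZMod 2) (c : I → I → ℚ)
    (hodd : ∀ i j, p i = p j → c i j = 0)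
    (hsym : ∀ i j, c i j = c j i) :
    ∀ u : List I,
      (Csub p).mkQ (TensorProduct.lift (brkt p c) (cob p c (mono u))) = 0 := by
  intro u
  rw [expand p c u]
  have h1 : ∑ σ : (Fin u.length × Fin u.length) × (Fin u.length × Fin u.length),
      FF p c u σ = 0 :=
    Finset.sum_involution (fun σ _ => phi σ) (fun σ _ => cancel p c hodd hsym u σ)
      (fun σ _ h => FF_ne_phi p c u σ h) (fun σ _ => Finset.mem_univ _)
      (fun σ _ => phi_invol σ)
  have h2 := nest u.length
    (fun i j a b : Fin u.length => f0 p c u i j a b + f1 p c u i j a b)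
  exact h2.symm.trans h1

end
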